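/- For every integer r ≥ 3, (r!)^{1/r} · ((r-2)!)^{1/(r-2)} < ((r-1)!)^{2/(r-1)}. -/

import Mathlib

lemma fact_le_half_pow (n : ℕ) : (n.factorial : ℝ) ≤ (((n : ℝ) + 1) / 2) ^ n := by
  induction n with
  | zero => norm_num
  | succ n ih =>
    have h1 : (0:ℝ) < (n:ℝ) + 1 := by positivity
    have ha : (0:ℝ) ≤ 1 / ((n:ℝ) + 1) := by positivity
    have hb : (2:ℝ) ≤ (1 + 1 / ((n:ℝ) + 1)) ^ (n + 1) := by
      have h := one_add_mul_le_pow (a := 1 / ((n:ℝ) + 1)) (by linarith) (n + 1)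
      have he : 1 + ((n:ℕ) + 1 : ℕ) * (1 / ((n:ℝ) + 1)) = 2 := by
        push_cast
        field_simp
        norm_num
      calc (2:ℝ) = 1 + ((n:ℕ) + 1 : ℕ) * (1 / ((n:ℝ) + 1)) := he.symm
        _ ≤ (1 + 1 / ((n:ℝ) + 1)) ^ (n + 1) := h
    have step : ((n:ℝ) + 1) * (((n:ℝ) + 1) / 2) ^ n ≤ (((n:ℝ) + 2) / 2) ^ (n + 1) := by
      have e1 : ((n:ℝ) + 2) / 2 = ((n:ℝ) + 1) / 2 * (1 + 1 / ((n:ℝ) + 1)) := by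
        field_simp
        ring
      rw [e1, mul_pow]
      have e2 : ((n:ℝ) + 1) * (((n:ℝ) + 1) / 2) ^ n = (((n:ℝ) + 1) / 2) ^ (n + 1) * 2 := by
        rw [pow_succ]; ring
      rw [e2]
      exact mul_le_mul_of_nonneg_left hb (by positivity)
    calc ((n + 1).factorial : ℝ) = ((n:ℝ) + 1) * (n.factorial : ℝ) := by
          rw [Nat.factorial_succ]; push_cast; ring
      _ ≤ ((n:ℝ) + 1) * (((n:ℝ) + 1) / 2) ^ n := by
          exact mul_le_mul_of_nonneg_left ih (by positivity)
      _ ≤ (((n:ℝ) + 2) / 2) ^ (n + 1) := step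
      _ = (((((n:ℕ) + 1 : ℕ) : ℝ) + 1) / 2) ^ (n + 1) := by push_cast; ring_nf

lemma key_log_ineq (n : ℕ) (hn : 2 ≤ n) :
    2 * Real.log (n.factorial) <
      (n : ℝ) * (((n : ℝ) + 1) * Real.log n - ((n : ℝ) - 1) * Real.log ((n : ℝ) + 1)) := by
  have hy : (2:ℝ) ≤ (n:ℝ) := by exact_mod_cast hn
  have hy0 : (0:ℝ) < (n:ℝ) := by linarith
  have hfpos : (0:ℝ) < (n.factorial : ℝ) := by exact_mod_cast n.factorial_pos
  -- h1 : log n! ≤ n * (log (n+1) - log 2)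
  have h1 : Real.log (n.factorial : ℝ) ≤ (n:ℝ) * (Real.log ((n:ℝ) + 1) - Real.log 2) := by
    have hle := fact_le_half_pow n
    have hlog : Real.log (n.factorial : ℝ) ≤ Real.log ((((n:ℝ) + 1) / 2) ^ n) :=
      Real.log_le_log hfpos hle
    rwa [Real.log_pow, Real.log_div (by positivity) (by norm_num)] at hlog
  -- h2 : (n+1) * (log (n+1) - log n) < 2 * log 2
  have h2 : ((n:ℝ) + 1) * (Real.log ((n:ℝ) + 1) - Real.log (n:ℝ)) < 2 * Real.log 2 := by
    rcases eq_or_lt_of_le hn with h | h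
    · -- n = 2
      have hn2 : (n:ℝ) = 2 := by exact_mod_cast h.symm
      rw [hn2]
      have h27 : Real.log 27 < Real.log 32 := Real.log_lt_log (by norm_num) (by norm_num)
      rw [show (27:ℝ) = 3 ^ (3:ℕ) by norm_num, show (32:ℝ) = 2 ^ (5:ℕ) by norm_num,
        Real.log_pow, Real.log_pow] at h27
      push_cast at h27
      norm_num
      linarith
    · -- n ≥ 3
      have hy3 : (3:ℝ) ≤ (n:ℝ) := by exact_mod_cast h
      have hgt1 : (1:ℝ) < ((n:ℝ) + 1) / (n:ℝ) := (one_lt_div hy0).mpr (by linarith)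
      have hlt : Real.log (((n:ℝ) + 1) / (n:ℝ)) < ((n:ℝ) + 1) / (n:ℝ) - 1 :=
        Real.log_lt_sub_one_of_pos (by positivity) (ne_of_gt hgt1)
      rw [Real.log_div (by positivity) (by positivity)] at hlt
      have hmul : ((n:ℝ) + 1) * (Real.log ((n:ℝ) + 1) - Real.log (n:ℝ)) <
          ((n:ℝ) + 1) * (((n:ℝ) + 1) / (n:ℝ) - 1) :=
        mul_lt_mul_of_pos_left hlt (by linarith)
      have hfr : ((n:ℝ) + 1) * (((n:ℝ) + 1) / (n:ℝ) - 1) = ((n:ℝ) + 1) / (n:ℝ) := by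
        field_simp
        ring
      have hfr2 : ((n:ℝ) + 1) / (n:ℝ) ≤ 4 / 3 := by
        rw [div_le_div_iff₀ hy0 (by norm_num)]
        linarith
      have hl2 : (0.6931471803 : ℝ) < Real.log 2 := Real.log_two_gt_d9
      rw [hfr] at hmul
      linarith
  have hmul2 : (n:ℝ) * (((n:ℝ) + 1) * (Real.log ((n:ℝ) + 1) - Real.log (n:ℝ))) <
      (n:ℝ) * (2 * Real.log 2) := mul_lt_mul_of_pos_left h2 hy0
  nlinarith [h1, hmul2]

theorem factorial_root_log_convex (r : ℕ) (hr : 3 ≤ r) :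
    (r.factorial : ℝ) ^ ((1 : ℝ) / r) * ((r - 2).factorial : ℝ) ^ ((1 : ℝ) / ((r : ℝ) - 2)) <
      ((r - 1).factorial : ℝ) ^ ((2 : ℝ) / ((r : ℝ) - 1)) := by
  obtain ⟨m, rfl⟩ : ∃ m, r = m + 3 := ⟨r - 3, by omega⟩
  have h21 : m + 3 - 2 = m + 1 := by omega
  have h11 : m + 3 - 1 = m + 2 := by omega
  rw [h21, h11]
  set x : ℝ := (m : ℝ) with hx
  have hA : (0:ℝ) < ((m + 3).factorial : ℝ) := by exact_mod_cast (m + 3).factorial_pos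
  have hB : (0:ℝ) < ((m + 1).factorial : ℝ) := by exact_mod_cast (m + 1).factorial_pos
  have hC : (0:ℝ) < ((m + 2).factorial : ℝ) := by exact_mod_cast (m + 2).factorial_pos
  have hcast : ((m + 3 : ℕ) : ℝ) = x + 3 := by push_cast; ring
  -- log relations
  have hlogA : Real.log ((m + 3).factorial : ℝ) =
      Real.log ((m + 2).factorial : ℝ) + Real.log (x + 3) := by
    have : ((m + 3).factorial : ℝ) = (x + 3) * ((m + 2).factorial : ℝ) := by
      rw [show m + 3 = (m + 2) + 1 by ring, Nat.factorial_succ]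
      push_cast; ring
    rw [this, Real.log_mul (by positivity) (by positivity)]
    ring
  have hlogB : Real.log ((m + 1).factorial : ℝ) =
      Real.log ((m + 2).factorial : ℝ) - Real.log (x + 2) := by
    have : ((m + 2).factorial : ℝ) = (x + 2) * ((m + 1).factorial : ℝ) := by
      rw [show m + 2 = (m + 1) + 1 by ring, Nat.factorial_succ]
      push_cast; ring
    rw [this, Real.log_mul (by positivity) (by positivity)]
    ring
  have key : 2 * Real.log (((m + 2).factorial : ℝ)) <
      (x + 2) * ((x + 3) * Real.log (x + 2) - (x + 1) * Real.log (x + 3)) := by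
    have h := key_log_ineq (m + 2) (by omega)
    push_cast at h
    rw [show (m:ℝ) + 2 + 1 = (m:ℝ) + 3 by ring, show (m:ℝ) + 2 - 1 = (m:ℝ) + 1 by ring] at h
    exact h
  rw [Real.rpow_def_of_pos hA, Real.rpow_def_of_pos hB, Real.rpow_def_of_pos hC, ← Real.exp_add]
  rw [Real.exp_lt_exp]
  rw [hcast, hlogA, hlogB]
  set F := Real.log ((m + 2).factorial : ℝ) with hF
  set P := Real.log (x + 2) with hP
  set Q := Real.log (x + 3) with hQ
  have h3 : (0:ℝ) < x + 3 := by positivity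
  have h1 : (0:ℝ) < x + 1 := by positivity
  have h2 : (0:ℝ) < x + 2 := by positivity
  have hgoal : (F + Q) / (x + 3) + (F - P) / (x + 1) < 2 * F / (x + 2) := by
    rw [div_add_div _ _ h3.ne' h1.ne', div_lt_div_iff₀ (by positivity) h2]
    nlinarith [key]
  have e1 : (x + 3 - 2) = x + 1 := by ring
  have e2 : (x + 3 - 1) = x + 2 := by ring
  rw [e1, e2]
  calc (F + Q) * (1 / (x + 3)) + (F - P) * (1 / (x + 1))
      = (F + Q) / (x + 3) + (F - P) / (x + 1) := by ring
    _ < 2 * F / (x + 2) := hgoal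
    _ = F * (2 / (x + 2)) := by ring
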